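/- Let K be a semiring and (Σ,M) an OP alphabet. If a series S:(Σ,M)^+→K is strictly regular, then S belongs to N(Σ,M,K), i.e., there exist an alphabet Σ', a map h:Σ'→Σ, a one-state restricted weighted OPA B over (Σ',h⁻¹(M)) and K, and an OPL L over (Σ',h⁻¹(M)) such that S = h(⟦B⟧∩L). -/

import Mathlib

namespace WOP

/-- Precedence relations: yields precedence, equal in precedence, takes precedence. -/
inductive PrecRel where
  | lt | eq | gt
deriving DecidableEq

/-- An operator precedence matrix on `Σ ∪ {#}`, where `none` encodes `#`.
It assigns at most one precedence relation to each ordered pair, with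
`# ⋖ a` and `a ⋗ #` for every letter `a`. -/
structure OPM (A : Type) where
  rel : Option A → Option A → Option PrecRel
  hash_lt : ∀ a : A, rel none (some a) = some .lt
  hash_gt : ∀ a : A, rel (some a) none = some .gt

variable {A B K : Type}

/-- The letter of `#w#` at position `i` (positions `0` and `> |w|` carry `#`, i.e. `none`). -/
def letterAt (w : List A) (i : ℕ) : Option A :=
  if i = 0 then none else w[i - 1]?

section ChainRel

variable (M : OPM A) (L : ℕ → Option A)

mutual
  /-- `ChainMid M L k j`: there are `k = k_s < ... < k_m = j` with
  `L k_s ≐ L k_{s+1} ≐ ... ≐ L k_{m-1} ⋗ L k_m` and the gap condition between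
  consecutive elements. -/
  inductive ChainMid : ℕ → ℕ → Prop where
    | last {k j : ℕ} : M.rel (L k) (L j) = some .gt → ChainGap k j → ChainMid k j
    | step {k k' j : ℕ} : M.rel (L k) (L k') = some .eq → ChainGap k k' →
        ChainMid k' j → ChainMid k j

  /-- The gap condition between consecutive elements of a chain:
  adjacent positions or a chain. -/
  inductive ChainGap : ℕ → ℕ → Prop where
    | adj (k : ℕ) : ChainGap k (k + 1)
    | chain {k k' : ℕ} : Chain k k' → ChainGap k k'

  /-- The chain relation `i ⤳ j`: there are positions `i = k_1 < ... < k_m = j` with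
  `L k_1 ⋖ L k_2 ≐ ... ≐ L k_{m-1} ⋗ L k_m` such that consecutive `k`'s are adjacent
  or themselves related by `⤳`. -/
  inductive Chain : ℕ → ℕ → Prop where
    | mk {i k j : ℕ} : M.rel (L i) (L k) = some .lt → ChainGap i k → ChainMid k j →
        Chain i j
end

end ChainRel

/-- `(Σ,M)^+`: the set of nonempty words compatible with `M`, i.e. `0 ⤳ |w|+1` in `#w#`. -/
def OPWords (M : OPM A) : Set (List A) :=
  {w | w ≠ [] ∧ Chain M (letterAt w) 0 (w.length + 1)}

/-- An (unweighted) operator precedence automaton over the alphabet `A`. -/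
structure OPA (A : Type) where
  Q : Type
  fin : Fintype Q
  I : Set Q
  F : Set Q
  δpush : Set (Q × A × Q)
  δshift : Set (Q × A × Q)
  δpop : Set (Q × Q × Q)

/-- A weighted operator precedence automaton over the alphabet `A` and weights in `K`. -/
structure WOPA (A K : Type) extends OPA A where
  wtpush : Q × A × Q → K
  wtshift : Q × A × Q → K
  wtpop : Q × Q × Q → K

/-- A configuration: a stack of (symbol, state) pairs, a current state,
and the remaining input. -/
structure Config (A Q : Type) where
  stack : List (A × Q)
  state : Q
  input : List A

/-- The moves (transitions) an OPA may take. -/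
inductive Move (A Q : Type) where
  | push (q : Q) (b : A) (r : Q)
  | shift (q : Q) (b : A) (r : Q)
  | pop (q p r : Q)

/-- The topmost stack symbol (`none` = `#` for the empty stack). -/
def topSym {Q : Type} (st : List (A × Q)) : Option A := st.head?.map Prod.fst

/-- One step of an OPA on an OP alphabet `(A, M)`. -/
inductive Exec (M : OPM A) (T : OPA A) : Config A T.Q → Move A T.Q → Config A T.Q → Prop where
  | push {st : List (A × T.Q)} {q r : T.Q} {b : A} {x : List A} :
      M.rel (topSym st) (some b) = some .lt → (q, b, r) ∈ T.δpush →
      Exec M T ⟨st, q, b :: x⟩ (.push q b r) ⟨(b, q) :: st, r, x⟩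
  | shift {st : List (A × T.Q)} {p q r : T.Q} {a b : A} {x : List A} :
      M.rel (some a) (some b) = some .eq → (q, b, r) ∈ T.δshift →
      Exec M T ⟨(a, p) :: st, q, b :: x⟩ (.shift q b r) ⟨(b, p) :: st, r, x⟩
  | pop {st : List (A × T.Q)} {p q r : T.Q} {a : A} {x : List A} :
      M.rel (some a) x.head? = some .gt → (q, p, r) ∈ T.δpop →
      Exec M T ⟨(a, p) :: st, q, x⟩ (.pop q p r) ⟨st, r, x⟩

/-- Execution of a sequence of moves. -/
inductive ExecList (M : OPM A) (T : OPA A) :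
    Config A T.Q → List (Move A T.Q) → Config A T.Q → Prop where
  | nil (c : Config A T.Q) : ExecList M T c [] c
  | cons {c c' c'' : Config A T.Q} {m : Move A T.Q} {ms : List (Move A T.Q)} :
      Exec M T c m c' → ExecList M T c' ms c'' → ExecList M T c (m :: ms) c''

/-- The weight of a move of a weighted OPA. -/
def moveWt [Semiring K] (W : WOPA A K) : Move A W.Q → K
  | .push q b r => W.wtpush (q, b, r)
  | .shift q b r => W.wtshift (q, b, r)
  | .pop q p r => W.wtpop (q, p, r)

/-- The accepting runs of an OPA on `w`: an initial state, a sequence of moves from the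
initial configuration (empty stack, whole input) to a final configuration
(empty stack, input read), and the final state reached. -/
def AccRuns (M : OPM A) (T : OPA A) (w : List A) : Set (T.Q × List (Move A T.Q) × T.Q) :=
  {ρ | ρ.1 ∈ T.I ∧ ρ.2.2 ∈ T.F ∧ ExecList M T ⟨[], ρ.1, w⟩ ρ.2.1 ⟨[], ρ.2.2, []⟩}

/-- The behavior `⟦W⟧(w)`: the sum over all accepting runs of `W` on `w` of the product
(in order) of the weights of the moves of the run. -/
noncomputable def behavior [Semiring K] (M : OPM A) (W : WOPA A K) (w : List A) : K :=
  ∑ᶠ ρ ∈ AccRuns M W.toOPA w, (ρ.2.1.map (moveWt W)).prod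

/-- A weighted OPA is restricted (an rwOPA) if all pop weights are `1`. -/
def Restricted [Semiring K] (W : WOPA A K) : Prop := ∀ t ∈ W.δpop, W.wtpop t = 1

/-- A series `S : (Σ,M)^+ → K` is regular if it is the behavior of some wOPA. -/
def Regular [Semiring K] (M : OPM A) (S : List A → K) : Prop :=
  ∃ W : WOPA A K, ∀ w ∈ OPWords M, S w = behavior M W w

/-- A series is strictly regular if it is the behavior of some restricted wOPA. -/
def StrictlyRegular [Semiring K] (M : OPM A) (S : List A → K) : Prop :=
  ∃ W : WOPA A K, Restricted W ∧ ∀ w ∈ OPWords M, S w = behavior M W w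

/-- Unweighted acceptance. -/
def Accepts (M : OPM A) (T : OPA A) (w : List A) : Prop :=
  ∃ qI ms qF, qI ∈ T.I ∧ qF ∈ T.F ∧ ExecList M T ⟨[], qI, w⟩ ms ⟨[], qF, []⟩

/-- A language `L ⊆ (Σ,M)^+` is an operator precedence language if it is the set of
compatible words accepted by some OPA. -/
def IsOPL (M : OPM A) (L : Set (List A)) : Prop :=
  ∃ T : OPA A, L = {w | w ∈ OPWords M ∧ Accepts M T w}

/-- The intersection `S ∩ L` of a series with a language. -/
noncomputable def interSeries [Semiring K] (S : List A → K) (L : Set (List A))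
    (w : List A) : K :=
  open Classical in if w ∈ L then S w else 0

/-- `h : Σ → Γ` is OPM-preserving: `a ⊙ b` iff `h(a) ⊙ h(b)` for every relation `⊙`. -/
def OPMPreserving (M : OPM A) (M' : OPM B) (h : A → B) : Prop :=
  ∀ a b : A, M.rel (some a) (some b) = M'.rel (some (h a)) (some (h b))

/-- The image series `h(S)(v) = ∑_{w ∈ (Σ,M)^+, h(w) = v} S(w)`. -/
noncomputable def mapSeries [Semiring K] (M : OPM A) (h : A → B) (S : List A → K)
    (v : List B) : K :=
  ∑ᶠ w ∈ {w | w ∈ OPWords M ∧ w.map h = v}, S w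

/-- The pullback OPM `h⁻¹(M)` along `h : Σ' → Σ`. -/
def pullOPM (M : OPM A) (h : B → A) : OPM B where
  rel o₁ o₂ := M.rel (o₁.map h) (o₂.map h)
  hash_lt b := M.hash_lt (h b)
  hash_gt b := M.hash_gt (h b)

/-- The Nivat class `N(Σ,M,K)`: series obtained from a one-state restricted wOPA over a
pulled-back OP alphabet, intersected with an OPL, followed by the projection. -/
def NivatClass [Semiring K] (M : OPM A) (S : List A → K) : Prop :=
  ∃ (B : Type) (_ : Fintype B) (h : B → A) (W : WOPA B K) (L : Set (List B)),
    Restricted W ∧ (∃ q₀ : W.Q, ∀ q : W.Q, q = q₀) ∧ IsOPL (pullOPM M h) L ∧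
    ∀ v ∈ OPWords M,
      S v = mapSeries (pullOPM M h) h (interSeries (behavior (pullOPM M h) W) L) v

/-- An OPL step function: a finite sum `∑ kᵢ · 1_{Lᵢ}` with the `Lᵢ` OPLs forming a
partition of `(Σ,M)^+`. -/
def IsOPLStep [Semiring K] (M : OPM A) (S : List A → K) : Prop :=
  ∃ (n : ℕ) (k : Fin n → K) (L : Fin n → Set (List A)),
    (∀ i, IsOPL M (L i)) ∧ (∀ i j, i ≠ j → Disjoint (L i) (L j)) ∧
    (⋃ i, L i) = OPWords M ∧ ∀ i, ∀ w ∈ L i, S w = k i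



section NivatProof

variable {A B K : Type}

theorem letterAt_map (h : B → A) (w : List B) (i : ℕ) :
    letterAt (w.map h) i = (letterAt w i).map h := by
  unfold letterAt
  split <;> simp

theorem chain_congr {M₁ : OPM A} {M₂ : OPM B} {L₁ : ℕ → Option A} {L₂ : ℕ → Option B}
    (hrel : ∀ i j, M₁.rel (L₁ i) (L₁ j) = M₂.rel (L₂ i) (L₂ j)) :
    ∀ {i j}, Chain M₁ L₁ i j → Chain M₂ L₂ i j := by
  intro i j hc
  refine Chain.rec (motive_1 := fun k j _ => ChainMid M₂ L₂ k j)
    (motive_2 := fun k j _ => ChainGap M₂ L₂ k j)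
    (motive_3 := fun i j _ => Chain M₂ L₂ i j) ?_ ?_ ?_ ?_ ?_ hc
  · intro k j hgt hgap ih
    exact ChainMid.last (by rw [← hrel]; exact hgt) ih
  · intro k k' j heq hgap hmid ih1 ih2
    exact ChainMid.step (by rw [← hrel]; exact heq) ih1 ih2
  · intro k
    exact ChainGap.adj k
  · intro k k' hc ih
    exact ChainGap.chain ih
  · intro i k j hlt hgap hmid ih1 ih2
    exact Chain.mk (by rw [← hrel]; exact hlt) ih1 ih2

theorem opwords_pull (M : OPM A) (h : B → A) (w : List B) :
    w ∈ OPWords (pullOPM M h) ↔ w.map h ∈ OPWords M := by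
  have key : ∀ i j, (pullOPM M h).rel (letterAt w i) (letterAt w j)
      = M.rel (letterAt (w.map h) i) (letterAt (w.map h) j) := by
    intro i j; rw [letterAt_map, letterAt_map]; rfl
  constructor
  · rintro ⟨hne, hc⟩
    refine ⟨by simpa using hne, by simpa using chain_congr key hc⟩
  · rintro ⟨hne, hc⟩
    refine ⟨by simpa using hne, by simpa using chain_congr (fun i j => (key i j).symm) hc⟩
/-- Relabel a move along maps on letters and states. -/
def mapMove {B' Q Q' : Type} (fb : B → B') (fq : Q → Q') : Move B Q → Move B' Q'
  | .push q b r => .push (fq q) (fb b) (fq r)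
  | .shift q b r => .shift (fq q) (fb b) (fq r)
  | .pop q p r => .pop (fq q) (fq p) (fq r)

section Constructions

variable [Semiring K] (W : WOPA A K)

/-- Annotation component for letters: `inl (q,r,c,d)` for push letters (push transition
`(q,a,r)`, later popped by `(c,q,d)`), `inr (q,r)` for shift letters. -/
abbrev Ann (W : WOPA A K) : Type := (W.Q × W.Q × W.Q × W.Q) ⊕ (W.Q × W.Q)

/-- Annotated letters. -/
abbrev NLetter (W : WOPA A K) : Type := A × Ann W

/-- States of the language automaton: simulated state plus pending pop data. -/
abbrev TQ (W : WOPA A K) : Type := W.Q × (W.Q × W.Q)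

/-- The language automaton checking that annotations describe an accepting run of `W`. -/
@[reducible] def nivOPA (q₀ : W.Q) : OPA (NLetter W) where
  Q := TQ W
  fin := by have := W.fin; exact instFintypeProd _ _
  I := {p | p.1 ∈ W.I ∧ p.2 = (q₀, q₀)}
  F := {p | p.1 ∈ W.F}
  δpush := {x | ∃ a q r c d e, x = ((q, e), (a, Sum.inl (q, r, c, d)), (r, (c, d))) ∧
    (q, a, r) ∈ W.δpush}
  δshift := {x | ∃ a q r e, x = ((q, e), (a, Sum.inr (q, r)), (r, e)) ∧ (q, a, r) ∈ W.δshift}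
  δpop := {x | ∃ c d p e₀, x = ((c, (c, d)), (p, e₀), (d, e₀)) ∧ (c, p, d) ∈ W.δpop}

/-- The one-state restricted weighted automaton reading annotated letters. -/
@[reducible] def nivW : WOPA (NLetter W) K where
  Q := PUnit
  fin := inferInstance
  I := Set.univ
  F := Set.univ
  δpush := Set.univ
  δshift := Set.univ
  δpop := Set.univ
  wtpush := fun x => match x.2.1.2 with
    | Sum.inl (q, r, _, _) => W.wtpush (q, x.2.1.1, r)
    | Sum.inr _ => 1
  wtshift := fun x => match x.2.1.2 with
    | Sum.inl _ => 1
    | Sum.inr (q, r) => W.wtshift (q, x.2.1.1, r)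
  wtpop := fun _ => 1

/-- Projection of moves of the language automaton to moves of `W`. -/
def projM : Move (NLetter W) (TQ W) → Move A W.Q :=
  mapMove Prod.fst Prod.fst

end Constructions

section ExecLemmas
set_option linter.unusedSectionVars false

variable [Semiring K] {W : WOPA A K} {q₀ : W.Q} {M : OPM A}

/-- Project a configuration of the language automaton to a configuration of `W`. -/
def projC (c : Config (NLetter W) (TQ W)) : Config A W.Q :=
  ⟨c.stack.map (fun p => (p.1.1, p.2.1)), c.state.1, c.input.map Prod.fst⟩

theorem topSym_proj (st : List (NLetter W × TQ W)) :
    topSym (st.map (fun p => (p.1.1, p.2.1))) = (topSym st).map Prod.fst := by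
  cases st <;> simp [topSym]

theorem proj_exec {c c' : Config (NLetter W) (nivOPA W q₀).Q} {m}
    (hex : Exec (pullOPM M Prod.fst) (nivOPA W q₀) c m c') :
    Exec M W.toOPA (projC c) (projM W m) (projC (W := W) c') := by
  cases hex with
  | push hrel hδ =>
    obtain ⟨a, q, r, cc, d, e, hx, hw⟩ := hδ
    injection hx with h1 hx; injection hx with h2 h3
    subst h1 h2 h3
    refine Exec.push ?_ hw
    rw [topSym_proj] at *
    exact hrel
  | shift hrel hδ =>
    obtain ⟨a, q, r, e, hx, hw⟩ := hδ
    injection hx with h1 hx; injection hx with h2 h3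
    subst h1 h2 h3
    exact Exec.shift hrel hw
  | pop hrel hδ =>
    obtain ⟨cc, d, p, e₀, hx, hw⟩ := hδ
    injection hx with h1 hx; injection hx with h2 h3
    subst h1 h2 h3
    refine Exec.pop ?_ hw
    simpa [List.head?_map, pullOPM] using hrel

theorem proj_execList {c c' : Config (NLetter W) (nivOPA W q₀).Q} {ms}
    (hex : ExecList (pullOPM M Prod.fst) (nivOPA W q₀) c ms c') :
    ExecList M W.toOPA (projC c) (ms.map (projM W)) (projC (W := W) c') := by
  induction hex with
  | nil c => exact ExecList.nil _
  | cons h1 h2 ih => exact ExecList.cons (proj_exec h1) ih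


/-- Collapse a configuration to the one-state automaton. -/
def collC (c : Config (NLetter W) (TQ W)) : Config (NLetter W) PUnit :=
  ⟨c.stack.map (fun p => (p.1, PUnit.unit)), PUnit.unit, c.input⟩

def collM : Move (NLetter W) (TQ W) → Move (NLetter W) PUnit :=
  mapMove id (fun _ => PUnit.unit)

theorem topSym_coll (st : List (NLetter W × TQ W)) :
    topSym (st.map (fun p => (p.1, PUnit.unit))) = topSym st := by
  cases st <;> simp [topSym]

theorem coll_exec {c c' : Config (NLetter W) (nivOPA W q₀).Q} {m}
    (hex : Exec (pullOPM M Prod.fst) (nivOPA W q₀) c m c') :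
    Exec (pullOPM M Prod.fst) (nivW W).toOPA (collC c) (collM (W := W) m) (collC (W := W) c') := by
  cases hex with
  | push hrel hδ =>
    refine Exec.push ?_ (Set.mem_univ _)
    rw [topSym_coll]; exact hrel
  | shift hrel hδ => exact Exec.shift hrel (Set.mem_univ _)
  | pop hrel hδ => exact Exec.pop hrel (Set.mem_univ _)

theorem coll_execList {c c' : Config (NLetter W) (nivOPA W q₀).Q} {ms}
    (hex : ExecList (pullOPM M Prod.fst) (nivOPA W q₀) c ms c') :
    ExecList (pullOPM M Prod.fst) (nivW W).toOPA (collC c) (ms.map (collM (W := W)))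
      (collC (W := W) c') := by
  induction hex with
  | nil c => exact ExecList.nil _
  | cons h1 h2 ih => exact ExecList.cons (coll_exec h1) ih

end ExecLemmas

section Determinism
set_option linter.unusedSectionVars false

variable {M : OPM A}

/-- Step determinism of an OPA. -/
def StepDet (M : OPM A) (T : OPA A) : Prop :=
  ∀ c m₁ c₁ m₂ c₂, Exec M T c m₁ c₁ → Exec M T c m₂ c₂ → m₁ = m₂ ∧ c₁ = c₂

theorem not_exec_dead {T : OPA A} {q m c'} : ¬ Exec M T ⟨[], q, []⟩ m c' := by
  rintro (_ | _ | _)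

theorem execList_unique {T : OPA A} (hdet : StepDet M T) :
    ∀ {c ns₁ cf₁ ns₂ cf₂}, ExecList M T c ns₁ cf₁ → ExecList M T c ns₂ cf₂ →
      cf₁.stack = [] → cf₁.input = [] → cf₂.stack = [] → cf₂.input = [] →
      ns₁ = ns₂ ∧ cf₁ = cf₂ := by
  intro c ns₁ cf₁ ns₂ cf₂ h1
  induction h1 generalizing ns₂ cf₂ with
  | nil c =>
    intro h2 e1 e2 e3 e4
    cases h2 with
    | nil => exact ⟨rfl, rfl⟩
    | cons hstep _ =>
      obtain ⟨st, q, i⟩ := c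
      simp only at e1 e2; subst e1 e2
      exact absurd hstep not_exec_dead
  | cons hstep hrest ih =>
    intro h2 e1 e2 e3 e4
    cases h2 with
    | nil =>
      cases hstep <;> simp_all
    | cons hstep' hrest' =>
      obtain ⟨hm, hc⟩ := hdet _ _ _ _ _ hstep hstep'
      subst hm; subst hc
      obtain ⟨h3, h4⟩ := ih hrest' e1 e2 e3 e4
      exact ⟨by rw [h3], h4⟩

theorem stepDet_nivW [Semiring K] {W : WOPA A K} :
    StepDet (pullOPM M Prod.fst) (nivW W).toOPA := by
  rintro c m₁ c₁ m₂ c₂ h1 h2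
  cases h1 <;> cases h2 <;> simp_all [topSym] <;> exact @Subsingleton.elim PUnit _ _ _

theorem stepDet_nivOPA [Semiring K] {W : WOPA A K} {q₀ : W.Q} :
    StepDet (pullOPM M Prod.fst) (nivOPA W q₀) := by
  rintro c m₁ c₁ m₂ c₂ h1 h2
  cases h1 <;> cases h2 <;> simp_all [topSym, nivOPA] <;> aesop

end Determinism

section MainLemmas
set_option linter.unusedSectionVars false
variable [Semiring K] {W : WOPA A K} {q₀ : W.Q} {M : OPM A}

theorem wt_eq (hres : Restricted W) {c c' m}
    (hex : Exec (pullOPM M Prod.fst) (nivOPA W q₀) c m c') :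
    moveWt (nivW W) (collM (W := W) m) = moveWt W (projM W m) := by
  cases hex with
  | push hrel hδ =>
    obtain ⟨a, q, r, cc, d, e, hx, hw⟩ := hδ
    injection hx with h1 hx; injection hx with h2 h3
    subst h1 h2 h3
    rfl
  | shift hrel hδ =>
    obtain ⟨a, q, r, e, hx, hw⟩ := hδ
    injection hx with h1 hx; injection hx with h2 h3
    subst h1 h2 h3
    rfl
  | pop hrel hδ =>
    obtain ⟨cc, d, p, e₀, hx, hw⟩ := hδ
    injection hx with h1 hx; injection hx with h2 h3
    subst h1 h2 h3
    simp only [moveWt, collM, mapMove, projM, nivW]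
    exact (hres _ hw).symm

theorem wt_list (hres : Restricted W) {c c' ms}
    (hex : ExecList (pullOPM M Prod.fst) (nivOPA W q₀) c ms c') :
    (ms.map (collM (W := W))).map (moveWt (nivW W)) = (ms.map (projM W)).map (moveWt W) := by
  induction hex with
  | nil c => rfl
  | cons h1 h2 ih => simp only [List.map_cons, wt_eq hres h1, ih]

theorem topSym_shadow {st' : List (NLetter W × TQ W)} {st : List (A × W.Q)}
    (h : st'.map (fun p => (p.1.1, p.2.1)) = st) :
    (topSym st').map Prod.fst = topSym st := by
  subst h; cases st' <;> simp [topSym]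

theorem cons_eq_append_singleton {α : Type} {a : α} {l l' : List α} {e : α}
    (h : a :: l = l' ++ [e]) : a = l'.headD e ∧ l = (l' ++ [e]).tail := by
  cases l' <;> simp_all

theorem forward {c ms cf} (hex : ExecList M W.toOPA c ms cf)
    (h1 : cf.stack = []) (h2 : cf.input = []) :
    ∃ (w : List (NLetter W)) (pend : List (W.Q × W.Q)),
      pend.length = c.stack.length ∧ w.map Prod.fst = c.input ∧
      ∀ (eL : W.Q × W.Q) (st' : List (NLetter W × TQ W)),
        st'.map (fun p => (p.1.1, p.2.1)) = c.stack →
        st'.map (fun p => p.2.2) = (pend ++ [eL]).tail →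
        ∃ ns, ns.map (projM W) = ms ∧
          ExecList (pullOPM M Prod.fst) (nivOPA W q₀) ⟨st', (c.state, pend.headD eL), w⟩ ns
            ⟨[], (cf.state, eL), []⟩ := by
  induction hex with
  | nil c =>
    obtain ⟨st, q, x⟩ := c
    simp only at h1 h2; subst h1 h2
    refine ⟨[], [], rfl, rfl, ?_⟩
    intro eL st' hsh hst
    simp only [List.map_eq_nil_iff] at hsh; subst hsh
    exact ⟨[], rfl, ExecList.nil _⟩
  | cons hstep hrest ih =>
    obtain ⟨w', pend', hlen, hfst, hmain⟩ := ih h1 h2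
    cases hstep with
    | push hrel hδ =>
      rename_i st q r b x
      simp only [List.length_cons] at hlen
      cases pend' with
      | nil => simp at hlen
      | cons f₀ rest =>
        refine ⟨(b, Sum.inl (q, r, f₀.1, f₀.2)) :: w', rest, by simpa using hlen,
          by simpa using hfst, ?_⟩
        intro eL st' hsh hst
        obtain ⟨ns', hns', hex'⟩ := hmain eL
          (((b, Sum.inl (q, r, f₀.1, f₀.2)), (q, rest.headD eL)) :: st')
          (by simp [hsh]) (by cases rest <;> simp_all)
        refine ⟨Move.push (q, rest.headD eL) (b, Sum.inl (q, r, f₀.1, f₀.2)) (r, (f₀.1, f₀.2))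
          :: ns', by simpa [projM, mapMove] using hns', ExecList.cons
            (c' := ⟨((b, Sum.inl (q, r, f₀.1, f₀.2)), (q, rest.headD eL)) :: st',
              (r, (f₀.1, f₀.2)), w'⟩) ?_ ?_⟩
        · refine Exec.push ?_ ⟨b, q, r, f₀.1, f₀.2, rest.headD eL, rfl, hδ⟩
          show M.rel ((topSym st').map Prod.fst) _ = _
          rw [topSym_shadow hsh]; exact hrel
        · have hf : (f₀.1, f₀.2) = f₀ := rfl
          rw [hf]
          simpa [List.headD] using hex'
    | shift hrel hδ =>
      rename_i st p q r aL bA x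
      refine ⟨(bA, Sum.inr (q, r)) :: w', pend', by simpa using hlen, by simpa using hfst, ?_⟩
      intro eL st' hsh hst
      cases st' with
      | nil => simp at hsh
      | cons hd st₂' =>
        obtain ⟨hhd, hsh₂⟩ := by simpa using hsh
        simp only [List.map_cons] at hst
        obtain ⟨ns', hns', hex'⟩ := hmain eL (((bA, Sum.inr (q, r)), hd.2) :: st₂')
          (by simp [hsh₂, hhd.2]) (by simpa using hst)
        refine ⟨Move.shift (q, pend'.headD eL) (bA, Sum.inr (q, r)) (r, pend'.headD eL)
          :: ns', by simpa [projM, mapMove] using hns', ExecList.cons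
            (c' := ⟨((bA, Sum.inr (q, r)), hd.2) :: st₂', (r, pend'.headD eL), w'⟩) ?_ ?_⟩
        · have hhd1 : hd = ((hd.1.1, hd.1.2), hd.2) := rfl
          rw [hhd1]
          refine Exec.shift ?_ ⟨bA, q, r, pend'.headD eL, rfl, hδ⟩
          show M.rel (some hd.1.1) _ = _
          rw [hhd.1]; exact hrel
        · exact hex'
    | pop hrel hδ =>
      rename_i st p q r aL x
      refine ⟨w', (q, r) :: pend', by simpa using hlen, hfst, ?_⟩
      intro eL st' hsh hst
      cases st' with
      | nil => simp at hsh
      | cons hd st₂' =>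
        obtain ⟨hhd, hsh₂⟩ := by simpa using hsh
        simp only [List.map_cons, List.cons_append, List.tail_cons] at hst
        obtain ⟨hs₀, hst₂⟩ := cons_eq_append_singleton hst
        obtain ⟨ns', hns', hex'⟩ := hmain eL st₂' hsh₂ hst₂
        refine ⟨Move.pop (q, (q, r)) hd.2 (r, hd.2.2) :: ns',
          by simpa [projM, mapMove, hhd.2] using hns', ExecList.cons
            (c' := ⟨st₂', (r, hd.2.2), w'⟩) ?_ ?_⟩
        · have hhd1 : hd = ((hd.1.1, hd.1.2), hd.2) := rfl
          rw [hhd1]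
          refine Exec.pop ?_ ⟨q, r, hd.2.1, hd.2.2, rfl, by rw [hhd.2]; exact hδ⟩
          show M.rel (some hd.1.1) (Option.map Prod.fst w'.head?) = _
          rw [hhd.1, ← List.head?_map, hfst]; exact hrel
        · rw [hs₀]; exact hex'

end MainLemmas

section WordDet
set_option linter.unusedSectionVars false
variable [Semiring K] {W : WOPA A K} {q₀ : W.Q} {M : OPM A}

/-- The input word (and the resolved pending data) is determined by the projected move
sequence, for executions of the language automaton ending with empty stack and input. -/
theorem word_det : ∀ {ns₁ : List (Move (NLetter W) (TQ W))} {c₁ cf₁ ns₂ c₂ cf₂},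
    ExecList (pullOPM M Prod.fst) (nivOPA W q₀) c₁ ns₁ cf₁ →
    ExecList (pullOPM M Prod.fst) (nivOPA W q₀) c₂ ns₂ cf₂ →
    cf₁.stack = [] → cf₁.input = [] → cf₂.stack = [] → cf₂.input = [] →
    ns₁.map (projM W) = ns₂.map (projM W) →
    c₁.input = c₂.input ∧
      (c₁.state.2 :: c₁.stack.map (fun p => p.2.2)).dropLast
        = (c₂.state.2 :: c₂.stack.map (fun p => p.2.2)).dropLast := by
  intro ns₁ c₁ cf₁ ns₂ c₂ cf₂ h1
  induction h1 generalizing ns₂ c₂ cf₂ with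
  | nil c =>
    intro h2 e1 e2 e3 e4 hproj
    have hns : ns₂ = [] := by simpa using congrArg List.length hproj.symm
    subst hns
    cases h2
    obtain ⟨sta, qa, xa⟩ := c
    obtain ⟨st2, q2, x2⟩ := c₂
    simp only at e1 e2 e3 e4; subst e1 e2 e3 e4
    exact ⟨rfl, by simp⟩
  | cons hstep hrest ih =>
    intro h2 e1 e2 e3 e4 hproj
    cases h2 with
    | nil => simp at hproj
    | cons hstep' hrest' =>
      simp only [List.map_cons, List.cons.injEq] at hproj
      obtain ⟨hm, hms⟩ := hproj
      obtain ⟨hinp, hpend⟩ := ih hrest' e1 e2 e3 e4 hms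
      clear ih
      cases hstep with
      | push hrel hδ =>
        obtain ⟨a, q, r, cc, d, e, hx, hw⟩ := hδ
        injection hx with hx1 hx; injection hx with hx2 hx3
        subst hx1 hx2 hx3
        cases hstep' with
        | push hrel' hδ' =>
          obtain ⟨a', q', r', cc', d', e', hx, hw'⟩ := hδ'
          injection hx with hx1 hx; injection hx with hx2 hx3
          subst hx1 hx2 hx3
          simp only [projM, mapMove, Move.push.injEq] at hm
          obtain ⟨hq, ha, hr⟩ := hm
          subst hq ha hr
          simp only [List.map_cons, List.dropLast_cons₂, List.cons.injEq] at hpend hinp ⊢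
          obtain ⟨hcd, hrest2⟩ := hpend
          injection hcd with hc hd
          subst hc hd
          exact ⟨by simp [hinp], by simp [hrest2]⟩
        | shift hrel' hδ' =>
          obtain ⟨a', q', r', e', hx, hw'⟩ := hδ'
          injection hx with hx1 hx; injection hx with hx2 hx3
          subst hx1 hx2 hx3
          simp [projM, mapMove] at hm
        | pop hrel' hδ' =>
          obtain ⟨c', d', p', e₀', hx, hw'⟩ := hδ'
          injection hx with hx1 hx; injection hx with hx2 hx3
          subst hx1 hx2 hx3
          simp [projM, mapMove] at hm
      | shift hrel hδ =>
        obtain ⟨a, q, r, e, hx, hw⟩ := hδ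
        injection hx with hx1 hx; injection hx with hx2 hx3
        subst hx1 hx2 hx3
        cases hstep' with
        | push hrel' hδ' =>
          obtain ⟨a', q', r', cc', d', e', hx, hw'⟩ := hδ'
          injection hx with hx1 hx; injection hx with hx2 hx3
          subst hx1 hx2 hx3
          simp [projM, mapMove] at hm
        | shift hrel' hδ' =>
          obtain ⟨a', q', r', e', hx, hw'⟩ := hδ'
          injection hx with hx1 hx; injection hx with hx2 hx3
          subst hx1 hx2 hx3
          simp only [projM, mapMove, Move.shift.injEq] at hm
          obtain ⟨hq, ha, hr⟩ := hm
          subst hq ha hr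
          simp only [List.map_cons, List.dropLast_cons₂, List.cons.injEq] at hpend hinp ⊢
          obtain ⟨he, hrest2⟩ := hpend
          subst he
          exact ⟨by simp [hinp], by simp [hrest2]⟩
        | pop hrel' hδ' =>
          obtain ⟨c', d', p', e₀', hx, hw'⟩ := hδ'
          injection hx with hx1 hx; injection hx with hx2 hx3
          subst hx1 hx2 hx3
          simp [projM, mapMove] at hm
      | pop hrel hδ =>
        obtain ⟨cc, d, p, e₀, hx, hw⟩ := hδ
        injection hx with hx1 hx; injection hx with hx2 hx3
        subst hx1 hx2 hx3
        cases hstep' with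
        | push hrel' hδ' =>
          obtain ⟨a', q', r', cc', d', e', hx, hw'⟩ := hδ'
          injection hx with hx1 hx; injection hx with hx2 hx3
          subst hx1 hx2 hx3
          simp [projM, mapMove] at hm
        | shift hrel' hδ' =>
          obtain ⟨a', q', r', e', hx, hw'⟩ := hδ'
          injection hx with hx1 hx; injection hx with hx2 hx3
          subst hx1 hx2 hx3
          simp [projM, mapMove] at hm
        | pop hrel' hδ' =>
          obtain ⟨cc', d', p', e₀', hx, hw'⟩ := hδ'
          injection hx with hx1 hx; injection hx with hx2 hx3
          subst hx1 hx2 hx3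
          simp only [projM, mapMove, Move.pop.injEq] at hm
          obtain ⟨hcd, hp, hd2⟩ := hm
          subst hcd hd2 hp
          simp only [List.map_cons, List.dropLast_cons₂, List.cons.injEq] at hpend hinp ⊢
          exact ⟨by simp [hinp], by simp [hpend]⟩
end WordDet

section AccUnique
set_option linter.unusedSectionVars false
variable [Semiring K] {W : WOPA A K} {q₀ : W.Q} {M : OPM A}

theorem first_state {w : List (NLetter W)} {s ns t} (hw : w ≠ [])
    (hs : s ∈ (nivOPA W q₀).I)
    (h : ExecList (pullOPM M Prod.fst) (nivOPA W q₀) ⟨[], s, w⟩ ns ⟨[], t, []⟩) :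
    ∃ a q r c d, w.head? = some (a, Sum.inl (q, r, c, d)) ∧ s = (q, (q₀, q₀)) := by
  cases h with
  | nil => exact absurd rfl hw
  | cons hstep hrest =>
    cases hstep with
    | push hrel hδ =>
      obtain ⟨a, q, r, c, d, e, hx, hwp⟩ := hδ
      injection hx with h1 hx; injection hx with h2 h3
      subst h2 h3
      refine ⟨a, q, r, c, d, rfl, ?_⟩
      have he : e = (q₀, q₀) := by rw [← hs.2, h1]
      rw [h1, he]

theorem acc_unique {w : List (NLetter W)} (hw : w ≠ []) {s ns t s' ns' t'}
    (hs : s ∈ (nivOPA W q₀).I) (hs' : s' ∈ (nivOPA W q₀).I)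
    (h : ExecList (pullOPM M Prod.fst) (nivOPA W q₀) ⟨[], s, w⟩ ns ⟨[], t, []⟩)
    (h' : ExecList (pullOPM M Prod.fst) (nivOPA W q₀) ⟨[], s', w⟩ ns' ⟨[], t', []⟩) :
    s = s' ∧ ns = ns' ∧ t = t' := by
  obtain ⟨a, q, r, c, d, hh, hss⟩ := first_state hw hs h
  obtain ⟨a', q', r', c', d', hh', hss'⟩ := first_state hw hs' h'
  rw [hh] at hh'
  injection hh' with hh2
  injection hh2 with hb1 hb2
  injection hb2 with hb3
  injection hb3 with hq hrest2
  have hseq : s = s' := by rw [hss, hss', hq]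
  subst hseq
  obtain ⟨h1, h2⟩ := execList_unique stepDet_nivOPA h h' rfl rfl rfl rfl
  exact ⟨rfl, h1, by injection h2⟩

theorem behavior_nivW (hres : Restricted W) {w : List (NLetter W)} {s ns t}
    (hT : ExecList (pullOPM M Prod.fst) (nivOPA W q₀) ⟨[], s, w⟩ ns ⟨[], t, []⟩) :
    behavior (pullOPM M Prod.fst) (nivW W) w
      = ((ns.map (projM W)).map (moveWt W)).prod := by
  have hW' : ExecList (pullOPM M Prod.fst) (nivW W).toOPA ⟨[], PUnit.unit, w⟩
      (ns.map (collM (W := W))) ⟨[], PUnit.unit, []⟩ := by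
    have := coll_execList (M := M) (q₀ := q₀) hT
    simpa [collC] using this
  have hsingle : AccRuns (pullOPM M Prod.fst) (nivW W).toOPA w
      = {(PUnit.unit, ns.map (collM (W := W)), PUnit.unit)} := by
    ext ρ
    constructor
    · rintro ⟨hI, hF, hexec⟩
      have h1 : ρ.1 = PUnit.unit := @Subsingleton.elim PUnit _ _ _
      have h2 : ρ.2.2 = PUnit.unit := @Subsingleton.elim PUnit _ _ _
      rw [h1, h2] at hexec
      obtain ⟨hns, -⟩ := execList_unique stepDet_nivW hexec hW' rfl rfl rfl rfl
      have : ρ = (ρ.1, ρ.2.1, ρ.2.2) := rfl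
      rw [Set.mem_singleton_iff, this, h1, h2, hns]
    · rintro rfl
      exact ⟨Set.mem_univ _, Set.mem_univ _, hW'⟩
  rw [behavior, hsingle, finsum_mem_singleton]
  exact congrArg List.prod (wt_list hres hT)

end AccUnique

/-- Choice of an accepting run of an OPA. -/
noncomputable def pickRun (M : OPM A) (T : OPA A) (d : T.Q × List (Move A T.Q) × T.Q)
    (w : List A) : T.Q × List (Move A T.Q) × T.Q :=
  open Classical in
  if h : Accepts M T w then
    ⟨h.choose, h.choose_spec.choose, h.choose_spec.choose_spec.choose⟩
  else d

theorem pickRun_spec {M : OPM A} {T : OPA A} {d w} (h : Accepts M T w) :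
    (pickRun M T d w).1 ∈ T.I ∧ (pickRun M T d w).2.2 ∈ T.F ∧
      ExecList M T ⟨[], (pickRun M T d w).1, w⟩ (pickRun M T d w).2.1
        ⟨[], (pickRun M T d w).2.2, []⟩ := by
  have hspec := h.choose_spec.choose_spec.choose_spec
  simp only [pickRun, dif_pos h]
  exact hspec

theorem finsum_interSeries [Semiring K] {α : Type} (s L : Set (List α)) (f : List α → K) :
    (∑ᶠ i ∈ s, interSeries f L i) = ∑ᶠ i ∈ s ∩ L, f i := by
  have h1 : ∀ i, interSeries f L i = Set.indicator L f i := by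
    intro i; by_cases hi : i ∈ L <;> simp [interSeries, Set.indicator, hi]
  calc (∑ᶠ i ∈ s, interSeries f L i) = ∑ᶠ i ∈ s, Set.indicator L f i :=
        finsum_mem_congr rfl (fun i _ => h1 i)
    _ = ∑ᶠ i, Set.indicator s (Set.indicator L f) i := finsum_mem_def _ _
    _ = ∑ᶠ i, Set.indicator (s ∩ L) f i := by rw [Set.indicator_indicator]
    _ = ∑ᶠ i ∈ s ∩ L, f i := (finsum_mem_def _ _).symm

end NivatProof

/-- Every strictly regular series belongs to the Nivat class `N(Σ,M,K)`. -/
theorem strictlyRegular_mem_nivat {A K : Type} [Fintype A] [Semiring K] (M : OPM A)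
    (S : List A → K) (hS : StrictlyRegular M S) : NivatClass M S := by
  obtain ⟨W, hres, hbeh⟩ := hS
  by_cases hQ : Nonempty W.Q
  · obtain ⟨q₀⟩ := hQ
    haveI := W.fin
    refine ⟨NLetter W, inferInstance, Prod.fst, nivW W,
      {w | w ∈ OPWords (pullOPM M Prod.fst) ∧
        Accepts (pullOPM M Prod.fst) (nivOPA W q₀) w},
      fun t _ => rfl, ⟨PUnit.unit, fun q => @Subsingleton.elim PUnit _ _ _⟩,
      ⟨nivOPA W q₀, rfl⟩, ?_⟩
    intro v hv
    set M' := pullOPM M (Prod.fst : NLetter W → A) with hM'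
    set T' := nivOPA W q₀ with hT'
    set L : Set (List (NLetter W)) := {w | w ∈ OPWords M' ∧ Accepts M' T' w} with hL
    set Pre : Set (List (NLetter W)) := {w | w ∈ OPWords M' ∧ w.map Prod.fst = v} with hPre
    have hvne : v ≠ [] := hv.1
    set d : T'.Q × List (Move (NLetter W) T'.Q) × T'.Q :=
      ((q₀, (q₀, q₀)), [], (q₀, (q₀, q₀))) with hd
    set Ψ : List (NLetter W) → W.Q × List (Move A W.Q) × W.Q := fun w =>
      ((pickRun M' T' d w).1.1, (pickRun M' T' d w).2.1.map (projM W),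
        (pickRun M' T' d w).2.2.1) with hΨ
    rw [hbeh v hv, mapSeries]
    have hstep2 : (∑ᶠ w ∈ {w | w ∈ OPWords M' ∧ w.map Prod.fst = v},
        interSeries (behavior M' (nivW W)) L w) = ∑ᶠ w ∈ Pre ∩ L, behavior M' (nivW W) w :=
      finsum_interSeries _ _ _
    rw [hstep2, behavior]
    refine (finsum_mem_eq_of_bijOn Ψ ⟨?_, ?_, ?_⟩ ?_).symm
    · -- MapsTo
      rintro w ⟨⟨hwO, hwv⟩, ⟨-, hacc⟩⟩
      obtain ⟨hI, hF, hexec⟩ := pickRun_spec (d := d) hacc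
      have hproj := proj_execList (M := M) hexec
      refine ⟨hI.1, hF, ?_⟩
      simpa [projC, hwv] using hproj
    · -- InjOn
      rintro w₁ ⟨⟨hw₁O, hw₁v⟩, ⟨-, hacc₁⟩⟩ w₂ ⟨⟨hw₂O, hw₂v⟩, ⟨-, hacc₂⟩⟩ hψ
      obtain ⟨hI₁, hF₁, hexec₁⟩ := pickRun_spec (d := d) hacc₁
      obtain ⟨hI₂, hF₂, hexec₂⟩ := pickRun_spec (d := d) hacc₂
      have hproj : (pickRun M' T' d w₁).2.1.map (projM W)
          = (pickRun M' T' d w₂).2.1.map (projM W) := congrArg (fun p => p.2.1) hψ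
      exact (word_det hexec₁ hexec₂ rfl rfl rfl rfl hproj).1
    · -- SurjOn
      rintro ⟨qI, ms, qF⟩ ⟨hI, hF, hexec⟩
      obtain ⟨w, pend, hlen, hwv, hmain⟩ := forward (q₀ := q₀) hexec rfl rfl
      have hpend : pend = [] := List.length_eq_zero_iff.mp hlen
      subst hpend
      obtain ⟨ns, hns, hexec'⟩ := hmain (q₀, q₀) [] rfl rfl
      have hwO : w ∈ OPWords M' := (opwords_pull M Prod.fst w).mpr (by rw [hwv]; exact hv)
      have hwne : w ≠ [] := by
        intro h0; rw [h0] at hwv; exact hvne hwv.symm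
      have hacc : Accepts M' T' w :=
        ⟨(qI, (q₀, q₀)), ns, (qF, (q₀, q₀)), ⟨hI, rfl⟩, hF, hexec'⟩
      refine ⟨w, ⟨⟨hwO, hwv⟩, ⟨hwO, hacc⟩⟩, ?_⟩
      obtain ⟨hI', hF', hexec''⟩ := pickRun_spec (d := d) hacc
      obtain ⟨hs, hns', ht⟩ := acc_unique hwne hI' ⟨hI, rfl⟩ hexec'' hexec'
      simp only [hΨ, hs, hns', ht, hns]
    · -- pointwise weights
      rintro w ⟨⟨hwO, hwv⟩, ⟨-, hacc⟩⟩
      obtain ⟨hI, hF, hexec⟩ := pickRun_spec (d := d) hacc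
      exact behavior_nivW hres hexec
  · haveI : IsEmpty W.Q := not_nonempty_iff.mp hQ
    refine ⟨A, inferInstance, id, ⟨⟨PUnit, inferInstance, ∅, ∅, ∅, ∅, ∅⟩,
      fun _ => 1, fun _ => 1, fun _ => 1⟩,
      {w | w ∈ OPWords (pullOPM M id) ∧
        Accepts (pullOPM M id) ⟨PUnit, inferInstance, ∅, ∅, ∅, ∅, ∅⟩ w},
      fun t ht => rfl, ⟨PUnit.unit, fun q => @Subsingleton.elim PUnit _ _ _⟩,
      ⟨⟨PUnit, inferInstance, ∅, ∅, ∅, ∅, ∅⟩, rfl⟩, ?_⟩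
    intro v hv
    rw [hbeh v hv]
    have h0 : AccRuns M W.toOPA v = ∅ := Set.eq_empty_of_isEmpty _
    rw [behavior, h0, finsum_mem_empty, mapSeries]
    symm
    rw [finsum_mem_congr rfl (fun w _ => ?_), finsum_mem_zero]
    have hz : behavior (pullOPM M id)
        (⟨⟨PUnit, inferInstance, ∅, ∅, ∅, ∅, ∅⟩, fun _ => 1, fun _ => 1, fun _ => 1⟩ :
          WOPA A K) w = 0 := by
      have : AccRuns (pullOPM M id)
          (⟨PUnit, inferInstance, ∅, ∅, ∅, ∅, ∅⟩ : OPA A) w = ∅ := by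
        ext ρ; exact ⟨fun h => h.1, fun h => absurd h (Set.notMem_empty _)⟩
      rw [behavior, this, finsum_mem_empty]
    rw [interSeries, hz]
    split <;> rfl
end WOP
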